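/- arXiv:2007.13386 — 2 statements merged into one kernel-verified Lean document; each statement's English description precedes it below -/
import Mathlib

section
/- Fix an integer d ≥ 3, a bounded domain D ⊂ ℝ^d, and δ ∈ (0, 2/(d−2)]. There exists a constant C = C(d, D) such that for every ε ∈ (0,1), one has ε^d E[ Σ_{z ∈ J^ε_b} ρ_z^{d−2} ] ≤ C ε^{(2/(d−2) − δ)β}. -/
open Metric Set Bornology MeasureTheory ProbabilityTheory

noncomputable section

/-- Embedding of the lattice `ℤ^d` into `ℝ^d` (with the Euclidean norm). -/
def latt (d : ℕ) (z : Fin d → ℤ) : EuclideanSpace ℝ (Fin d) :=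
  (WithLp.equiv 2 (Fin d → ℝ)).symm fun i => (z i : ℝ)

/-- `Φ^ε(D) := {z ∈ ℤ^d : εz ∈ D}`. -/
def PhiEps (d : ℕ) (D : Set (EuclideanSpace ℝ (Fin d))) (ε : ℝ) : Set (Fin d → ℤ) :=
  {z | ε • latt d z ∈ D}

/-- `J^ε_b := {z ∈ Φ^ε(D) : ε^{d/(d−2)} ρ_z ≥ ε^{1+δ}}`. -/
def Jb (d : ℕ) (D : Set (EuclideanSpace ℝ (Fin d))) (ε δ : ℝ) (ρ : (Fin d → ℤ) → ℝ) :
    Set (Fin d → ℤ) :=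
  {z ∈ PhiEps d D ε | ε ^ (1 + δ) ≤ ε ^ ((d : ℝ) / ((d : ℝ) - 2)) * ρ z}

-- coordinate bound
lemma latt_coord_le (d : ℕ) (z : Fin d → ℤ) (i : Fin d) :
    |(z i : ℝ)| ≤ ‖latt d z‖ := by
  have h := EuclideanSpace.norm_eq (𝕜 := ℝ) (latt d z)
  have hzi : latt d z i = (z i : ℝ) := rfl
  rw [h]
  have h1 : |(z i : ℝ)| = Real.sqrt ((z i : ℝ) ^ 2) := by
    rw [Real.sqrt_sq_eq_abs]
  rw [h1]
  apply Real.sqrt_le_sqrt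
  have : ‖latt d z i‖ ^ 2 = (z i : ℝ) ^ 2 := by
    rw [hzi, Real.norm_eq_abs, sq_abs]
  rw [← this]
  exact Finset.single_le_sum (f := fun j => ‖latt d z j‖ ^ 2)
    (fun j _ => by positivity) (Finset.mem_univ i)

/-- `ε^d E[ Σ_{z ∈ J^ε_b} ρ_z^{d−2} ] ≤ C ε^{(2/(d−2) − δ)β}` with `C = C(d, D)`. -/
theorem annealed_large_radii_bound
    (d : ℕ) (hd : 3 ≤ d)
    (D : Set (EuclideanSpace ℝ (Fin d))) (hDopen : IsOpen D) (hDbdd : IsBounded D) :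
    ∃ C > 0, ∀ (δ β : ℝ), δ ∈ Set.Ioc (0 : ℝ) (2 / ((d : ℝ) - 2)) → 0 < β →
      ∀ (Ω : Type) (_ : MeasurableSpace Ω) (P : Measure Ω), IsProbabilityMeasure P →
      ∀ (ρ : (Fin d → ℤ) → Ω → ℝ),
        (∀ z, Measurable (ρ z)) →
        (∀ z ω, 0 ≤ ρ z ω) →
        iIndepFun ρ P →
        (∀ z, IdentDistrib (ρ z) (ρ 0) P P) →
        (∫⁻ ω, ENNReal.ofReal (ρ 0 ω ^ ((d : ℝ) - 2 + β)) ∂P ≤ 1) →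
        ∀ ε : ℝ, ε ∈ Set.Ioo (0 : ℝ) 1 →
          ε ^ (d : ℝ) *
              ∫ ω, ∑' z : Fin d → ℤ,
                Set.indicator (Jb d D ε δ (fun w => ρ w ω))
                  (fun w => ρ w ω ^ ((d : ℝ) - 2)) z ∂P
            ≤ C * ε ^ ((2 / ((d : ℝ) - 2) - δ) * β) := by
  obtain ⟨R₀, hR₀⟩ := hDbdd.subset_closedBall 0
  set R : ℝ := max R₀ 1 with hRdef
  have hR1 : (1 : ℝ) ≤ R := le_max_right _ _
  have hDsub : D ⊆ closedBall 0 R :=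
    hR₀.trans (closedBall_subset_closedBall (le_max_left _ _))
  refine ⟨(3 * R) ^ d, by positivity, ?_⟩
  rintro δ β ⟨hδ0, hδ2⟩ hβ Ω mΩ P hP ρ hmeas hnn _hind hid hmom ε ⟨hε0, hε1⟩
  have hd3 : (3 : ℝ) ≤ (d : ℝ) := by exact_mod_cast hd
  have hd2 : (0 : ℝ) < (d : ℝ) - 2 := by linarith
  set p : ℝ := (d : ℝ) - 2 + β with hpdef
  set c : ℝ := (2 / ((d : ℝ) - 2) - δ) * β with hcdef
  -- the finset of candidate lattice points
  have hRε : (1 : ℝ) ≤ R / ε := by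
    rw [le_div_iff₀ hε0]; nlinarith
  set N : ℤ := ⌊R / ε⌋ with hNdef
  have hN1 : (1 : ℤ) ≤ N := by
    rwa [hNdef, Int.le_floor, Int.cast_one]
  set S : Finset (Fin d → ℤ) := Fintype.piFinset fun _ => Finset.Icc (-N) N with hSdef
  have hPhiS : ∀ z, z ∈ PhiEps d D ε → z ∈ S := by
    intro z hz
    have hzD : ε • latt d z ∈ closedBall (0 : EuclideanSpace ℝ (Fin d)) R := hDsub hz
    rw [mem_closedBall_zero_iff] at hzD
    have hnorm : ε * ‖latt d z‖ ≤ R := by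
      rw [norm_smul, Real.norm_eq_abs, abs_of_pos hε0] at hzD; exact hzD
    have hnle : ‖latt d z‖ ≤ R / ε := (le_div_iff₀ hε0).2 (by linarith [hnorm])
    rw [hSdef, Fintype.mem_piFinset]
    intro i
    have hcoord : |(z i : ℝ)| ≤ R / ε := (latt_coord_le d z i).trans hnle
    rw [abs_le] at hcoord
    rw [Finset.mem_Icc]
    constructor
    · rw [neg_le]
      show -z i ≤ ⌊R / ε⌋
      rw [Int.le_floor]
      push_cast
      linarith [hcoord.1]
    · show z i ≤ ⌊R / ε⌋
      rw [Int.le_floor]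
      exact hcoord.2
  -- pointwise bound on each indicator term
  have hterm : ∀ (ω : Ω) (z : Fin d → ℤ),
      Set.indicator (Jb d D ε δ (fun w => ρ w ω)) (fun w => ρ w ω ^ ((d : ℝ) - 2)) z
        ≤ ε ^ c * ρ z ω ^ p := by
    intro ω z
    have hrhs : 0 ≤ ε ^ c * ρ z ω ^ p :=
      mul_nonneg (Real.rpow_nonneg hε0.le c) (Real.rpow_nonneg (hnn z ω) p)
    by_cases hz : z ∈ Jb d D ε δ (fun w => ρ w ω)
    · rw [Set.indicator_of_mem hz]
      obtain ⟨_, hineq⟩ := hz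
      -- deduce ρ z ω ≥ ε ^ (δ - 2/(d-2)) ≥ 1
      have hεpow : (0 : ℝ) < ε ^ ((d : ℝ) / ((d : ℝ) - 2)) := Real.rpow_pos_of_pos hε0 _
      have hρge : ε ^ ((1 : ℝ) + δ - (d : ℝ) / ((d : ℝ) - 2)) ≤ ρ z ω := by
        rw [Real.rpow_sub hε0, div_le_iff₀ hεpow]
        linarith [hineq]
      have hexp : (1 : ℝ) + δ - (d : ℝ) / ((d : ℝ) - 2) = δ - 2 / ((d : ℝ) - 2) := by
        field_simp
        ring
      rw [hexp] at hρge
      set e : ℝ := δ - 2 / ((d : ℝ) - 2) with hedef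
      have he0 : e ≤ 0 := by simp [hedef]; linarith
      have hT1 : (1 : ℝ) ≤ ε ^ e :=
        Real.one_le_rpow_of_pos_of_le_one_of_nonpos hε0 hε1.le he0
      have hρ1 : (1 : ℝ) ≤ ρ z ω := hT1.trans hρge
      have hρpos : (0 : ℝ) < ρ z ω := lt_of_lt_of_le one_pos hρ1
      have hsplit : ρ z ω ^ ((d : ℝ) - 2) = ρ z ω ^ p * ρ z ω ^ (-β) := by
        rw [← Real.rpow_add hρpos]
        congr 1
        rw [hpdef]; ring
      rw [hsplit]
      have hmono : ρ z ω ^ (-β) ≤ (ε ^ e) ^ (-β) :=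
        Real.rpow_le_rpow_of_nonpos (lt_of_lt_of_le one_pos hT1) hρge (by linarith)
      have hce : (ε ^ e) ^ (-β) = ε ^ c := by
        rw [← Real.rpow_mul hε0.le]
        congr 1
        rw [hedef, hcdef]; ring
      calc ρ z ω ^ p * ρ z ω ^ (-β) ≤ ρ z ω ^ p * (ε ^ e) ^ (-β) :=
            mul_le_mul_of_nonneg_left hmono (Real.rpow_nonneg (hnn z ω) p)
        _ = ε ^ c * ρ z ω ^ p := by rw [hce]; ring
    · rw [Set.indicator_of_notMem hz]; exact hrhs
  -- integrability and moment facts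
  have hmz : ∀ z, Measurable fun ω => ρ z ω ^ p := fun z => (hmeas z).pow measurable_const
  have hlz : ∀ z, ∫⁻ ω, ENNReal.ofReal (ρ z ω ^ p) ∂P ≤ 1 := by
    intro z
    have hcomp : IdentDistrib (fun ω => ENNReal.ofReal (ρ z ω ^ p))
        (fun ω => ENNReal.ofReal (ρ 0 ω ^ p)) P P :=
      (hid z).comp ((measurable_id.pow measurable_const).ennreal_ofReal)
    calc ∫⁻ ω, ENNReal.ofReal (ρ z ω ^ p) ∂P
        = ∫⁻ ω, ENNReal.ofReal (ρ 0 ω ^ p) ∂P := hcomp.lintegral_eq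
      _ ≤ 1 := hmom
  have hintz : ∀ z, Integrable (fun ω => ρ z ω ^ p) P := by
    intro z
    refine ⟨(hmz z).aestronglyMeasurable, ?_⟩
    rw [hasFiniteIntegral_iff_ofReal (ae_of_all _ fun ω => Real.rpow_nonneg (hnn z ω) p)]
    exact lt_of_le_of_lt (hlz z) ENNReal.one_lt_top
  have hiz : ∀ z, ∫ ω, ρ z ω ^ p ∂P ≤ 1 := by
    intro z
    rw [integral_eq_lintegral_of_nonneg_ae
        (ae_of_all _ fun ω => Real.rpow_nonneg (hnn z ω) p) (hmz z).aestronglyMeasurable]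
    calc (∫⁻ ω, ENNReal.ofReal (ρ z ω ^ p) ∂P).toReal
        ≤ (1 : ENNReal).toReal := ENNReal.toReal_mono ENNReal.one_ne_top (hlz z)
      _ = 1 := ENNReal.toReal_one
  set g : Ω → ℝ := fun ω => ∑ z ∈ S, ε ^ c * ρ z ω ^ p with hgdef
  have hgint : Integrable g P := integrable_finset_sum _ fun z _ => (hintz z).const_mul _
  have hfg : ∀ ω, (∑' z, Set.indicator (Jb d D ε δ fun w => ρ w ω)
      (fun w => ρ w ω ^ ((d : ℝ) - 2)) z) ≤ g ω := by
    intro ω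
    have hsupp : ∀ z ∉ S, Set.indicator (Jb d D ε δ fun w => ρ w ω)
        (fun w => ρ w ω ^ ((d : ℝ) - 2)) z = 0 := by
      intro z hz
      apply Set.indicator_of_notMem
      intro hmem
      exact hz (hPhiS z hmem.1)
    rw [tsum_eq_sum hsupp]
    exact Finset.sum_le_sum fun z _ => hterm ω z
  have hInt : (∫ ω, ∑' z, Set.indicator (Jb d D ε δ fun w => ρ w ω)
      (fun w => ρ w ω ^ ((d : ℝ) - 2)) z ∂P) ≤ ∫ ω, g ω ∂P := by
    refine integral_mono_of_nonneg (ae_of_all _ fun ω => ?_) hgint (ae_of_all _ hfg)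
    exact tsum_nonneg fun z =>
      Set.indicator_nonneg (fun w _ => Real.rpow_nonneg (hnn w ω) _) z
  have hg_le : (∫ ω, g ω ∂P) ≤ ε ^ c * S.card := by
    rw [hgdef]
    rw [integral_finset_sum _ fun z _ => (hintz z).const_mul _]
    calc ∑ z ∈ S, ∫ ω, ε ^ c * ρ z ω ^ p ∂P
        = ∑ z ∈ S, ε ^ c * ∫ ω, ρ z ω ^ p ∂P := by
          simp [integral_const_mul]
      _ ≤ ∑ _z ∈ S, ε ^ c * 1 := Finset.sum_le_sum fun z _ =>
          mul_le_mul_of_nonneg_left (hiz z) (Real.rpow_nonneg hε0.le c)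
      _ = ε ^ c * S.card := by
          rw [Finset.sum_const, nsmul_eq_mul]; ring
  -- counting bound
  have hNle : (N : ℝ) ≤ R / ε := Int.floor_le _
  have hcard : (S.card : ℝ) ≤ (3 * R / ε) ^ d := by
    have h1 : S.card = ((2 * N + 1).toNat) ^ d := by
      rw [hSdef, Fintype.card_piFinset_const, Int.card_Icc]
      congr 2
      ring
    have h2 : ((2 * N + 1).toNat : ℝ) = 2 * (N : ℝ) + 1 := by
      have : ((2 * N + 1).toNat : ℤ) = 2 * N + 1 := Int.toNat_of_nonneg (by linarith)
      exact_mod_cast this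
    rw [h1]
    push_cast
    rw [h2]
    apply pow_le_pow_left₀ (by positivity)
    calc 2 * (N : ℝ) + 1 ≤ 2 * (R / ε) + 1 := by linarith
      _ ≤ 3 * R / ε := by
          rw [mul_div_assoc]
          linarith
  calc ε ^ (d : ℝ) * ∫ ω, ∑' z, Set.indicator (Jb d D ε δ fun w => ρ w ω)
          (fun w => ρ w ω ^ ((d : ℝ) - 2)) z ∂P
      ≤ ε ^ (d : ℝ) * (ε ^ c * S.card) :=
        mul_le_mul_of_nonneg_left (hInt.trans hg_le) (Real.rpow_nonneg hε0.le _)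
    _ = (ε ^ d * (S.card : ℝ)) * ε ^ c := by
        rw [Real.rpow_natCast]; ring
    _ ≤ (3 * R) ^ d * ε ^ c := by
        apply mul_le_mul_of_nonneg_right _ (Real.rpow_nonneg hε0.le c)
        calc ε ^ d * (S.card : ℝ) ≤ ε ^ d * (3 * R / ε) ^ d :=
              mul_le_mul_of_nonneg_left hcard (by positivity)
          _ = (3 * R) ^ d := by
              rw [← mul_pow]
              congr 1
              field_simp
end
end

section
/- Fix an integer d ≥ 3, a bounded domain D ⊂ ℝ^d, and δ ∈ (0, 2/(d−2)]. There exists a constant C = C(d, D) such that for every ε ∈ (0,1) with ε^δ < 1/4, one has E[ ε^d Σ_{z ∈ Ĩ^ε_b} ρ_z^{d−2} ] ≤ C ε^{(2/(d−2) − δ)β}. -/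
open Metric Set Bornology MeasureTheory ProbabilityTheory

noncomputable section

/-- `H̃^ε_b := ∪_{z∈J^ε_b} B(εz, 2 min(ε^{d/(d−2)} ρ_z, 1))`. -/
def Htilde (d : ℕ) (D : Set (EuclideanSpace ℝ (Fin d))) (ε δ : ℝ) (ρ : (Fin d → ℤ) → ℝ) :
    Set (EuclideanSpace ℝ (Fin d)) :=
  ⋃ z ∈ Jb d D ε δ ρ,
    ball (ε • latt d z) (2 * min (ε ^ ((d : ℝ) / ((d : ℝ) - 2)) * ρ z) 1)

/-- `Ĩ^ε_b := {z ∈ Φ^ε(D) \ J^ε_b : H̃^ε_b ∩ B(εz, ε/4) ≠ ∅}`. -/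
def Itilde (d : ℕ) (D : Set (EuclideanSpace ℝ (Fin d))) (ε δ : ℝ) (ρ : (Fin d → ℤ) → ℝ) :
    Set (Fin d → ℤ) :=
  {z ∈ PhiEps d D ε \ Jb d D ε δ ρ |
    (Htilde d D ε δ ρ ∩ ball (ε • latt d z) (ε / 4)).Nonempty}


namespace AnnealedAux

open scoped ENNReal

lemma coord_le_dist {d : ℕ} (x y : EuclideanSpace ℝ (Fin d)) (i : Fin d) :
    |x i - y i| ≤ dist x y := by
  rw [EuclideanSpace.dist_eq, ← Real.dist_eq, ← Real.sqrt_sq (dist_nonneg (x := x i) (y := y i))]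
  exact Real.sqrt_le_sqrt (Finset.single_le_sum (f := fun j => dist (x j) (y j) ^ 2)
    (fun j _ => sq_nonneg _) (Finset.mem_univ i))

lemma smul_latt_apply {d : ℕ} (ε : ℝ) (z : Fin d → ℤ) (i : Fin d) :
    (ε • latt d z) i = ε * (z i : ℝ) := by
  simp [latt, PiLp.smul_apply, WithLp.equiv_symm_apply, smul_eq_mul]

/-- Counting lattice points in a ball. -/
lemma card_filter_dist_lt {d : ℕ} {ε r : ℝ} (hε : 0 < ε) (hr : 0 ≤ r)
    (x : EuclideanSpace ℝ (Fin d)) (S : Finset (Fin d → ℤ)) :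
    (((S.filter fun z => dist (ε • latt d z) x < r).card : ℝ)) ≤ (2 * r / ε + 3) ^ d := by
  classical
  set lo : Fin d → ℤ := fun i => ⌈(x i - r) / ε⌉ with hlo
  set hi : Fin d → ℤ := fun i => ⌊(x i + r) / ε⌋ with hhi
  have hsub : (S.filter fun z => dist (ε • latt d z) x < r) ⊆ Finset.Icc lo hi := by
    intro z hz
    rw [Finset.mem_filter] at hz
    have hdist := hz.2
    rw [Finset.mem_Icc]
    constructor <;> intro i <;>
    · have h1 : |(ε • latt d z) i - x i| ≤ dist (ε • latt d z) x := coord_le_dist _ _ i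
      rw [smul_latt_apply] at h1
      have h2 := abs_le.1 (h1.trans hdist.le)
      first
        | exact Int.ceil_le.2 (by rw [div_le_iff₀ hε]; nlinarith [h2.1])
        | exact Int.le_floor.2 (by rw [le_div_iff₀ hε]; nlinarith [h2.2])
  calc (((S.filter fun z => dist (ε • latt d z) x < r).card : ℝ))
      ≤ ((Finset.Icc lo hi).card : ℝ) := by exact_mod_cast Finset.card_le_card hsub
    _ ≤ (2 * r / ε + 3) ^ d := by
        rw [Pi.card_Icc]
        push_cast
        calc (∏ i : Fin d, ((Finset.Icc (lo i) (hi i)).card : ℝ))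
            ≤ ∏ i : Fin d, (2 * r / ε + 3) := by
              apply Finset.prod_le_prod (fun i _ => by positivity)
              intro i _
              rw [Int.card_Icc]
              rcases le_or_gt (hi i + 1 - lo i) 0 with h | h
              · rw [Int.toNat_of_nonpos h]; push_cast; positivity
              · rw [show (((hi i + 1 - lo i).toNat : ℕ) : ℝ) = ((hi i + 1 - lo i : ℤ) : ℝ) from
                  by exact_mod_cast congrArg (fun m : ℤ => (m : ℝ)) (Int.toNat_of_nonneg h.le)]
                push_cast
                have h1 : ((lo i : ℝ)) ≥ (x i - r) / ε := Int.le_ceil _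
                have h2 : ((hi i : ℝ)) ≤ (x i + r) / ε := Int.floor_le _
                have : (x i + r) / ε - (x i - r) / ε = 2 * r / ε := by ring
                nlinarith
          _ = (2 * r / ε + 3) ^ d := by
              rw [Finset.prod_const, Finset.card_univ, Fintype.card_fin]

/-- The "bad event" set for a pair of lattice points, in terms of the mark. -/
def Sset (dd ε γ c : ℝ) : Set ℝ :=
  Ici (ε ^ (-γ)) ∩ {t | c < 2 * min (ε ^ dd * t) 1 + ε / 4}

lemma measurableSet_Sset (dd ε γ c : ℝ) : MeasurableSet (Sset dd ε γ c) := by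
  apply measurableSet_Ici.inter
  apply measurableSet_lt measurable_const
  apply Measurable.add_const
  apply Measurable.const_mul
  exact (measurable_id.const_mul _).min measurable_const

/-- Indicator of the bad event, with values in `ℝ≥0∞`. -/
def Sind (dd ε γ c : ℝ) : ℝ → ℝ≥0∞ := (Sset dd ε γ c).indicator 1

lemma measurable_Sind (dd ε γ c : ℝ) : Measurable (Sind dd ε γ c) :=
  measurable_const.indicator (measurableSet_Sset dd ε γ c)

lemma measurable_ofReal_rpow (q : ℝ) : Measurable fun t : ℝ => ENNReal.ofReal (t ^ q) := by
  measurability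

/-- Core analytic estimate: bound on the count factor on the event `t ≥ ε^{-γ}`. -/
lemma count_bound (d : ℕ) (hd : 3 ≤ d) {ε δ β γ p dd t : ℝ}
    (hε0 : 0 < ε) (hε1 : ε < 1) (hδ0 : 0 < δ) (hβ : 0 < β)
    (hγdef : γ = 2 / ((d:ℝ) - 2) - δ) (hpdef : p = (d:ℝ) - 2 + β)
    (hdddef : dd = (d:ℝ) / ((d:ℝ) - 2))
    (ht : ε ^ (-γ) ≤ t) :
    (2 * (2 * min (ε ^ dd * t) 1 + ε / 4) / ε + 3) ^ d
      ≤ (8:ℝ) ^ d * ((ε ^ (β - 2) + ε ^ (δ * (2 - β))) * ε ^ (2 * p / ((d:ℝ) - 2)) * t ^ p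
          + ε ^ (γ * p) * t ^ p) := by
  have hd2 : (0:ℝ) < (d:ℝ) - 2 := by
    have : (3:ℝ) ≤ (d:ℝ) := by exact_mod_cast hd
    linarith
  have hp0 : 0 < p := by rw [hpdef]; linarith
  have htpos : 0 < t := lt_of_lt_of_le (Real.rpow_pos_of_pos hε0 _) ht
  have hdd1 : dd = 1 + 2 / ((d:ℝ) - 2) := by rw [hdddef]; field_simp; ring
  set c : ℝ := 2 / ((d:ℝ) - 2) with hc
  set m : ℝ := min (ε ^ c * t) ε⁻¹ with hm
  have ha0 : 0 < ε ^ c * t := by positivity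
  have hm0 : 0 < m := lt_min ha0 (by positivity)
  have hγc : γ = c - δ := by rw [hγdef, hc]
  have hmlow : ε ^ δ ≤ m := by
    apply le_min
    · have h1 : ε ^ c * ε ^ (-γ) ≤ ε ^ c * t :=
        mul_le_mul_of_nonneg_left ht (Real.rpow_nonneg hε0.le _)
      calc ε ^ δ = ε ^ (c + -γ) := by rw [hγc]; ring_nf
        _ = ε ^ c * ε ^ (-γ) := Real.rpow_add hε0 _ _
        _ ≤ _ := h1
    · calc ε ^ δ ≤ ε ^ (-1 : ℝ) := Real.rpow_le_rpow_of_exponent_ge hε0 hε1.le (by linarith)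
        _ = ε⁻¹ := Real.rpow_neg_one ε
  have hkey : ε ^ dd * t = ε * (ε ^ c * t) := by
    rw [hdd1, Real.rpow_add hε0, Real.rpow_one]; ring
  have hrε : 2 * (2 * min (ε ^ dd * t) 1 + ε / 4) / ε + 3 = 4 * m + 7/2 := by
    rcases le_total (ε ^ dd * t) 1 with h | h
    · have h1 : min (ε ^ dd * t) 1 = ε ^ dd * t := min_eq_left h
      have h2 : ε ^ c * t ≤ ε⁻¹ := by
        rw [hkey] at h
        rw [← (one_div ε), le_div_iff₀ hε0]
        nlinarith
      have h3 : m = ε ^ c * t := min_eq_left h2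
      rw [h1, h3, hkey]; field_simp; ring
    · have h1 : min (ε ^ dd * t) 1 = 1 := min_eq_right h
      have h2 : ε⁻¹ ≤ ε ^ c * t := by
        rw [hkey] at h
        rw [← (one_div ε), div_le_iff₀ hε0]
        nlinarith
      have h3 : m = ε⁻¹ := min_eq_right h2
      rw [h1, h3]; field_simp; ring
  rw [hrε]
  have hmain : (4*m + 7/2) ^ d ≤ 8 ^ d * (m ^ (d:ℝ) + 1) := by
    rcases le_total m 1 with h | h
    · have h8 : (4*m+7/2) ≤ 8 := by linarith
      calc (4*m+7/2)^d ≤ 8^d := pow_le_pow_left₀ (by linarith [hm0.le]) h8 d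
        _ ≤ 8^d * (m ^ (d:ℝ) + 1) := by
            nlinarith [Real.rpow_nonneg hm0.le (d:ℝ), pow_pos (show (0:ℝ) < 8 by norm_num) d]
    · have h8 : (4*m+7/2) ≤ 8*m := by linarith
      calc (4*m+7/2)^d ≤ (8*m)^d := pow_le_pow_left₀ (by linarith [hm0.le]) h8 d
        _ = 8^d * m^d := mul_pow 8 m d
        _ = 8^d * m ^ (d:ℝ) := by rw [← Real.rpow_natCast m d]
        _ ≤ 8^d * (m ^ (d:ℝ) + 1) := by
            nlinarith [pow_pos (show (0:ℝ) < 8 by norm_num) d]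
  have hmd : m ^ (d:ℝ) ≤ (ε^(β-2) + ε^(δ*(2-β))) * ε^(2*p/((d:ℝ)-2)) * t ^ p := by
    have hsplit : m ^ (d:ℝ) = m ^ p * m ^ (2-β) := by
      rw [← Real.rpow_add hm0]; congr 1; rw [hpdef]; ring
    have h1 : m ^ p ≤ ε^(2*p/((d:ℝ)-2)) * t^p := by
      calc m ^ p ≤ (ε ^ c * t) ^ p := Real.rpow_le_rpow hm0.le (min_le_left _ _) hp0.le
        _ = (ε ^ c)^p * t^p := Real.mul_rpow (by positivity) htpos.le
        _ = ε^(2*p/((d:ℝ)-2)) * t^p := by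
            rw [← Real.rpow_mul hε0.le]
            congr 1
            rw [hc]; ring
    have h2 : m ^ (2-β) ≤ ε^(β-2) + ε^(δ*(2-β)) := by
      rcases le_total β 2 with hb | hb
      · have hh : m ^ (2-β) ≤ (ε⁻¹) ^ (2-β) :=
          Real.rpow_le_rpow hm0.le (min_le_right _ _) (by linarith)
        calc m ^ (2-β) ≤ (ε⁻¹)^(2-β) := hh
          _ = ε ^ (β-2) := by
              rw [Real.inv_rpow hε0.le, ← Real.rpow_neg hε0.le]
              congr 1; ring
          _ ≤ ε^(β-2) + ε^(δ*(2-β)) := le_add_of_nonneg_right (by positivity)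
      · have hh : m ^ (2-β) ≤ (ε^δ) ^ (2-β) :=
          Real.rpow_le_rpow_of_nonpos (by positivity) hmlow (by linarith)
        calc m ^ (2-β) ≤ (ε^δ)^(2-β) := hh
          _ = ε ^ (δ*(2-β)) := by rw [← Real.rpow_mul hε0.le]
          _ ≤ _ := le_add_of_nonneg_left (by positivity)
    calc m ^ (d:ℝ) = m^p * m^(2-β) := hsplit
      _ ≤ (ε^(2*p/((d:ℝ)-2)) * t^p) * (ε^(β-2) + ε^(δ*(2-β))) :=
          mul_le_mul h1 h2 (Real.rpow_nonneg hm0.le _) (by positivity)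
      _ = _ := by ring
  have hone : (1:ℝ) ≤ ε^(γ*p) * t^p := by
    calc (1:ℝ) = ε^(γ*p) * ε^(-(γ*p)) := by
          rw [← Real.rpow_add hε0]; simp
      _ = ε^(γ*p) * (ε^(-γ))^p := by
          rw [← Real.rpow_mul hε0.le]; congr 1; ring
      _ ≤ ε^(γ*p) * t^p :=
          mul_le_mul_of_nonneg_left
            (Real.rpow_le_rpow (Real.rpow_nonneg hε0.le _) ht hp0.le)
            (Real.rpow_nonneg hε0.le _)
  calc (4*m+7/2)^d ≤ 8^d * (m^(d:ℝ) + 1) := hmain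
    _ ≤ 8^d * ((ε^(β-2)+ε^(δ*(2-β))) * ε^(2*p/((d:ℝ)-2)) * t^p + ε^(γ*p) * t^p) := by
        apply mul_le_mul_of_nonneg_left (add_le_add hmd hone) (by positivity)

/-- The sum of the three ε-powers is at most `3 ε^{γβ}`. -/
lemma B_le (d : ℕ) (hd : 3 ≤ d) {ε δ β γ p : ℝ}
    (hε0 : 0 < ε) (hε1 : ε < 1) (hδ0 : 0 < δ) (hδ2 : δ ≤ 2 / ((d:ℝ) - 2)) (hβ : 0 < β)
    (hγdef : γ = 2 / ((d:ℝ) - 2) - δ) (hpdef : p = (d:ℝ) - 2 + β) :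
    (ε ^ (β - 2) + ε ^ (δ * (2 - β))) * ε ^ (2 * p / ((d:ℝ) - 2)) + ε ^ (γ * p)
      ≤ 3 * ε ^ (γ * β) := by
  have hd2 : (0:ℝ) < (d:ℝ) - 2 := by
    have : (3:ℝ) ≤ (d:ℝ) := by exact_mod_cast hd
    linarith
  have hkey : 2 * p / ((d:ℝ) - 2) = 2 + 2 * β / ((d:ℝ) - 2) := by
    rw [hpdef]; field_simp
  have hγβ : γ * β = 2 * β / ((d:ℝ) - 2) - δ * β := by rw [hγdef]; ring
  have he1 : ε ^ (β - 2) * ε ^ (2 * p / ((d:ℝ) - 2)) = ε ^ ((β-2) + 2 * p / ((d:ℝ) - 2)) :=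
    (Real.rpow_add hε0 _ _).symm
  have he2 : ε ^ (δ * (2 - β)) * ε ^ (2 * p / ((d:ℝ) - 2)) = ε ^ (δ*(2-β) + 2 * p / ((d:ℝ) - 2)) :=
    (Real.rpow_add hε0 _ _).symm
  have hb1 : ε ^ ((β-2) + 2 * p / ((d:ℝ) - 2)) ≤ ε ^ (γ * β) := by
    apply Real.rpow_le_rpow_of_exponent_ge hε0 hε1.le
    rw [hkey, hγβ]
    nlinarith [mul_pos hδ0 hβ]
  have hb2 : ε ^ (δ*(2-β) + 2 * p / ((d:ℝ) - 2)) ≤ ε ^ (γ * β) := by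
    apply Real.rpow_le_rpow_of_exponent_ge hε0 hε1.le
    rw [hkey, hγβ]
    nlinarith [mul_pos hδ0 hβ]
  have hb3 : ε ^ (γ * p) ≤ ε ^ (γ * β) := by
    apply Real.rpow_le_rpow_of_exponent_ge hε0 hε1.le
    rw [hpdef]
    have hγ0 : 0 ≤ γ := by rw [hγdef]; linarith
    nlinarith [hγ0, hd2]
  calc (ε ^ (β - 2) + ε ^ (δ * (2 - β))) * ε ^ (2 * p / ((d:ℝ) - 2)) + ε ^ (γ * p)
      = ε ^ ((β-2) + 2 * p / ((d:ℝ) - 2)) + ε ^ (δ*(2-β) + 2 * p / ((d:ℝ) - 2)) + ε ^ (γ * p) := by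
        rw [← he1, ← he2]; ring
    _ ≤ ε ^ (γ*β) + ε ^ (γ*β) + ε ^ (γ*β) := add_le_add (add_le_add hb1 hb2) hb3
    _ = 3 * ε ^ (γ * β) := by ring

end AnnealedAux

open AnnealedAux
open scoped ENNReal

/-- `E[ ε^d Σ_{z ∈ Ĩ^ε_b} ρ_z^{d−2} ] ≤ C ε^{(2/(d−2) − δ)β}` with `C = C(d, D)`. -/
theorem annealed_close_neighbours_bound
    (d : ℕ) (hd : 3 ≤ d)
    (D : Set (EuclideanSpace ℝ (Fin d))) (hDopen : IsOpen D) (hDbdd : IsBounded D) :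
    ∃ C > 0, ∀ (δ β : ℝ), δ ∈ Set.Ioc (0 : ℝ) (2 / ((d : ℝ) - 2)) → 0 < β →
      ∀ (Ω : Type) (_ : MeasurableSpace Ω) (P : Measure Ω), IsProbabilityMeasure P →
      ∀ (ρ : (Fin d → ℤ) → Ω → ℝ),
        (∀ z, Measurable (ρ z)) →
        (∀ z ω, 0 ≤ ρ z ω) →
        iIndepFun ρ P →
        (∀ z, IdentDistrib (ρ z) (ρ 0) P P) →
        (∫⁻ ω, ENNReal.ofReal (ρ 0 ω ^ ((d : ℝ) - 2 + β)) ∂P ≤ 1) →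
        ∀ ε : ℝ, ε ∈ Set.Ioo (0 : ℝ) 1 → ε ^ δ < 1 / 4 →
          (∫ ω, ε ^ (d : ℝ) *
              ∑' z : Fin d → ℤ,
                Set.indicator (Itilde d D ε δ (fun w => ρ w ω))
                  (fun w => ρ w ω ^ ((d : ℝ) - 2)) z ∂P)
            ≤ C * ε ^ ((2 / ((d : ℝ) - 2) - δ) * β) := by
  classical
  obtain ⟨R, hR1, hDR⟩ : ∃ R : ℝ, 1 ≤ R ∧ D ⊆ ball 0 R := by
    obtain ⟨r, hr⟩ := hDbdd.subset_ball 0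
    exact ⟨max r 1, le_max_right _ _, hr.trans (ball_subset_ball (le_max_left _ _))⟩
  refine ⟨6 * (2 * R + 3) ^ d * 8 ^ d, by positivity, ?_⟩
  rintro δ β ⟨hδ0, hδ2⟩ hβ Ω mΩ P hP ρ hmeas hpos hindep hident hmom ε ⟨hε0, hε1⟩ _
  set C0 : ℝ := 6 * (2 * R + 3) ^ d * 8 ^ d with hC0
  have hd2 : (0:ℝ) < (d:ℝ) - 2 := by
    have : (3:ℝ) ≤ (d:ℝ) := by exact_mod_cast hd
    linarith
  set dd : ℝ := (d : ℝ) / ((d : ℝ) - 2) with hdd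
  set γ : ℝ := 2 / ((d : ℝ) - 2) - δ with hγ
  set p : ℝ := (d : ℝ) - 2 + β with hp
  have hγ0 : 0 ≤ γ := by simp only [hγ]; linarith
  have hp0 : (0:ℝ) < p := by simp only [hp]; linarith
  -- the box
  set M : ℤ := ⌈R / ε⌉ with hM
  set T : Finset (Fin d → ℤ) := Finset.Icc (fun _ => -M) (fun _ => M) with hT
  have hMpos : (1:ℤ) ≤ M := by
    have h : (0:ℝ) < R / ε := by positivity
    have := Int.ceil_pos.2 h
    omega
  have hPhiT : ∀ {z : Fin d → ℤ}, z ∈ PhiEps d D ε → z ∈ T := by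
    intro z hz
    have hball := hDR hz
    rw [mem_ball, dist_zero_right] at hball
    rw [hT, Finset.mem_Icc]
    have key : ∀ i, |(z i : ℝ)| ≤ (M : ℝ) := by
      intro i
      have h1 : |(ε • latt d z) i - (0 : EuclideanSpace ℝ (Fin d)) i| ≤ dist (ε • latt d z) 0 :=
        coord_le_dist _ _ i
      have h0 : (0 : EuclideanSpace ℝ (Fin d)) i = 0 := rfl
      rw [smul_latt_apply, h0, sub_zero, dist_zero_right] at h1
      have h2 : |ε * (z i : ℝ)| < R := lt_of_le_of_lt h1 hball
      rw [abs_mul, abs_of_pos hε0] at h2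
      have h3 : |(z i : ℝ)| < R / ε := by rw [lt_div_iff₀ hε0]; linarith [h2]
      exact h3.le.trans (Int.le_ceil _)
    constructor
    · intro i
      have := abs_le.1 (key i)
      exact_mod_cast this.1
    · intro i
      have := abs_le.1 (key i)
      exact_mod_cast this.2
  have hTcard : ((T.card : ℝ)) ≤ (2 * R + 3) ^ d / ε ^ d := by
    have h1 : T.card = ((2*M+1).toNat)^d := by
      rw [hT, Pi.card_Icc]
      have hc : ∀ i : Fin d, (Finset.Icc ((fun _ => -M) i) ((fun _ => M) i)).card
          = (2*M+1).toNat := by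
        intro i
        rw [Int.card_Icc]
        congr 1
        ring
      rw [Finset.prod_congr rfl (fun i _ => hc i), Finset.prod_const, Finset.card_univ,
        Fintype.card_fin]
    rw [h1]
    push_cast
    have h2 : (((2*M+1).toNat : ℕ) : ℝ) ≤ (2*R+3)/ε := by
      rw [show (((2*M+1).toNat : ℕ) : ℝ) = ((2*M+1 : ℤ) : ℝ) from
        by exact_mod_cast congrArg (fun m : ℤ => (m:ℝ)) (Int.toNat_of_nonneg (by omega))]
      push_cast
      have hcl : ((M:ℝ)) < R/ε + 1 := Int.ceil_lt_add_one _
      rw [le_div_iff₀ hε0]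
      have h3 : ((M:ℝ)) * ε < R + ε := by
        have hmul := mul_lt_mul_of_pos_right hcl hε0
        have he : (R/ε + 1) * ε = R + ε := by field_simp
        linarith [he ▸ hmul]
      linarith [h3, hε1, hε0]
    calc ((((2*M+1).toNat : ℕ) : ℝ))^d ≤ ((2*R+3)/ε)^d :=
          pow_le_pow_left₀ (by positivity) h2 d
      _ = (2*R+3)^d / ε^d := div_pow _ _ d
  -- moment bounds
  have hψmeas : ∀ r : ℝ, Measurable fun t : ℝ => ENNReal.ofReal (t ^ r) := measurable_ofReal_rpow
  have hEp : ∀ z, ∫⁻ ω, ENNReal.ofReal (ρ z ω ^ p) ∂P ≤ 1 := by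
    intro z
    calc ∫⁻ ω, ENNReal.ofReal (ρ z ω ^ p) ∂P
        = ∫⁻ ω, ENNReal.ofReal (ρ 0 ω ^ p) ∂P := ((hident z).comp (hψmeas p)).lintegral_eq
      _ ≤ 1 := hmom
  have hEq2 : ∀ z, ∫⁻ ω, ENNReal.ofReal (ρ z ω ^ ((d:ℝ) - 2)) ∂P ≤ 2 := by
    intro z
    have hid' : ∫⁻ ω, ENNReal.ofReal (ρ z ω ^ ((d:ℝ)-2)) ∂P
        = ∫⁻ ω, ENNReal.ofReal (ρ 0 ω ^ ((d:ℝ)-2)) ∂P :=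
      ((hident z).comp (hψmeas _)).lintegral_eq
    rw [hid']
    have hpt : ∀ ω, ENNReal.ofReal (ρ 0 ω ^ ((d:ℝ)-2)) ≤ 1 + ENNReal.ofReal (ρ 0 ω ^ p) := by
      intro ω
      rcases le_total (ρ 0 ω) 1 with h1 | h1
      · have h2 : (ρ 0 ω) ^ ((d:ℝ)-2) ≤ 1 := Real.rpow_le_one (hpos 0 ω) h1 (by linarith)
        calc ENNReal.ofReal (ρ 0 ω ^ ((d:ℝ)-2)) ≤ 1 := by
              simpa using ENNReal.ofReal_le_ofReal h2
          _ ≤ 1 + ENNReal.ofReal (ρ 0 ω ^ p) := le_self_add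
      · have h2 : (ρ 0 ω) ^ ((d:ℝ)-2) ≤ (ρ 0 ω) ^ p :=
          Real.rpow_le_rpow_of_exponent_le h1 (by rw [hp]; linarith)
        calc ENNReal.ofReal (ρ 0 ω ^ ((d:ℝ)-2)) ≤ ENNReal.ofReal (ρ 0 ω ^ p) :=
              ENNReal.ofReal_le_ofReal h2
          _ ≤ 1 + ENNReal.ofReal (ρ 0 ω ^ p) := le_add_self
    calc ∫⁻ ω, ENNReal.ofReal (ρ 0 ω ^ ((d:ℝ)-2)) ∂P
        ≤ ∫⁻ ω, (1 + ENNReal.ofReal (ρ 0 ω ^ p)) ∂P := lintegral_mono hpt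
      _ = 1 + ∫⁻ ω, ENNReal.ofReal (ρ 0 ω ^ p) ∂P := by
          rw [lintegral_add_left measurable_const, lintegral_one, measure_univ]
      _ ≤ 1 + 1 := add_le_add le_rfl (hEp 0)
      _ = 2 := one_add_one_eq_two
  -- pointwise domination
  have hptwise : ∀ ω : Ω,
      ENNReal.ofReal (ε ^ (d:ℝ) * ∑' z, Set.indicator (Itilde d D ε δ (fun w => ρ w ω))
          (fun w => ρ w ω ^ ((d:ℝ)-2)) z)
        ≤ ENNReal.ofReal (ε ^ (d:ℝ)) *
            ∑ z ∈ T, ∑ z' ∈ T.erase z,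
              Sind dd ε γ (dist (ε • latt d z) (ε • latt d z')) (ρ z' ω)
                * ENNReal.ofReal (ρ z ω ^ ((d:ℝ)-2)) := by
    intro ω
    have hnn : ∀ z : Fin d → ℤ,
        0 ≤ Set.indicator (Itilde d D ε δ fun w => ρ w ω) (fun w => ρ w ω ^ ((d:ℝ)-2)) z :=
      fun z => Set.indicator_nonneg (fun w _ => Real.rpow_nonneg (hpos w ω) _) z
    have hsupp : ∀ b ∉ T,
        Set.indicator (Itilde d D ε δ fun w => ρ w ω) (fun w => ρ w ω ^ ((d:ℝ)-2)) b = 0 := by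
      intro b hb
      apply Set.indicator_of_notMem
      intro hbI
      exact hb (hPhiT hbI.1.1)
    rw [tsum_eq_sum hsupp, ENNReal.ofReal_mul (by positivity),
      ENNReal.ofReal_sum_of_nonneg (fun i _ => hnn i)]
    refine mul_le_mul_right (Finset.sum_le_sum ?_) _
    intro z hzT
    by_cases hzI : z ∈ Itilde d D ε δ fun w => ρ w ω
    · have hzI' := hzI
      obtain ⟨⟨hzPhi, hzJ⟩, x, hxH, hxb⟩ := hzI'
      simp only [Htilde, mem_iUnion, exists_prop] at hxH
      obtain ⟨z', hz'J, hxball⟩ := hxH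
      have hz'T : z' ∈ T := hPhiT hz'J.1
      have hz'ne : z' ≠ z := fun h => hzJ (h ▸ hz'J)
      have hmem : ρ z' ω ∈ Sset dd ε γ (dist (ε • latt d z) (ε • latt d z')) := by
        constructor
        · rw [mem_Ici]
          have h2 := hz'J.2
          have hsplit : ε ^ ((1:ℝ) + δ) = ε ^ ((d:ℝ)/((d:ℝ)-2)) * ε ^ (-γ) := by
            rw [← Real.rpow_add hε0]
            congr 1
            rw [hγ]
            field_simp
            ring
          rw [hsplit] at h2
          have hddpos : (0:ℝ) < ε ^ ((d:ℝ)/((d:ℝ)-2)) := Real.rpow_pos_of_pos hε0 _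
          exact le_of_mul_le_mul_left h2 hddpos
        · rw [mem_setOf_eq]
          rw [mem_ball] at hxball hxb
          have htri := dist_triangle (ε • latt d z) x (ε • latt d z')
          rw [dist_comm (ε • latt d z) x] at htri
          calc dist (ε • latt d z) (ε • latt d z')
              ≤ dist x (ε • latt d z) + dist x (ε • latt d z') := htri
            _ < ε/4 + 2 * min (ε ^ dd * ρ z' ω) 1 := add_lt_add hxb hxball
            _ = 2 * min (ε ^ dd * ρ z' ω) 1 + ε/4 := by ring
      calc ENNReal.ofReal
            (Set.indicator (Itilde d D ε δ fun w => ρ w ω) (fun w => ρ w ω ^ ((d:ℝ)-2)) z)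
          = Sind dd ε γ (dist (ε • latt d z) (ε • latt d z')) (ρ z' ω)
              * ENNReal.ofReal (ρ z ω ^ ((d:ℝ)-2)) := by
            rw [Set.indicator_of_mem hzI]
            simp only [Sind, Set.indicator_of_mem hmem, Pi.one_apply, one_mul]
        _ ≤ ∑ w ∈ T.erase z, Sind dd ε γ (dist (ε • latt d z) (ε • latt d w)) (ρ w ω)
              * ENNReal.ofReal (ρ z ω ^ ((d:ℝ)-2)) :=
            Finset.single_le_sum
              (f := fun w => Sind dd ε γ (dist (ε • latt d z) (ε • latt d w)) (ρ w ω)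
                * ENNReal.ofReal (ρ z ω ^ ((d:ℝ)-2)))
              (fun _ _ => zero_le) (Finset.mem_erase.2 ⟨hz'ne, hz'T⟩)
    · rw [Set.indicator_of_notMem hzI]
      simp
  -- the main constant
  set Bc : ℝ := 8^d * ((ε^(β-2) + ε^(δ*(2-β))) * ε^(2*p/((d:ℝ)-2)) + ε^(γ*p)) with hBc
  have hBnn : 0 ≤ Bc := by positivity
  -- per-site bound on the sum of indicator expectations
  have hinner : ∀ z' : Fin d → ℤ,
      ∑ z ∈ T.erase z', ∫⁻ ω, Sind dd ε γ (dist (ε • latt d z) (ε • latt d z')) (ρ z' ω) ∂P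
        ≤ ENNReal.ofReal Bc := by
    intro z'
    have hms : ∀ z ∈ T.erase z', Measurable fun ω =>
        Sind dd ε γ (dist (ε • latt d z) (ε • latt d z')) (ρ z' ω) :=
      fun z _ => (measurable_Sind _ _ _ _).comp (hmeas z')
    rw [← lintegral_finset_sum _ hms]
    have hcount : ∀ t : ℝ, 0 ≤ t →
        (∑ z ∈ T.erase z', Sind dd ε γ (dist (ε • latt d z) (ε • latt d z')) t)
          ≤ ENNReal.ofReal (Bc * t ^ p) := by
      intro t ht0
      by_cases hev : ε ^ (-γ) ≤ t
      · have htpos : 0 < t := lt_of_lt_of_le (Real.rpow_pos_of_pos hε0 _) hev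
        set r : ℝ := 2 * min (ε ^ dd * t) 1 + ε / 4 with hrdef
        have hminnn : 0 ≤ min (ε ^ dd * t) 1 := le_min (by positivity) zero_le_one
        have hr0 : 0 ≤ r := by rw [hrdef]; linarith
        have hsum : (∑ z ∈ T.erase z', Sind dd ε γ (dist (ε • latt d z) (ε • latt d z')) t)
            = (((T.erase z').filter
                fun z => t ∈ Sset dd ε γ (dist (ε • latt d z) (ε • latt d z'))).card : ℝ≥0∞) := by
          simp only [Sind, Set.indicator_apply, Pi.one_apply]
          rw [Finset.sum_boole]
        have hfsub : ((T.erase z').filter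
              fun z => t ∈ Sset dd ε γ (dist (ε • latt d z) (ε • latt d z')))
            ⊆ ((T.erase z').filter
              fun z => dist (ε • latt d z) (ε • latt d z') < r) := by
          intro z hz
          rw [Finset.mem_filter] at hz ⊢
          exact ⟨hz.1, hz.2.2⟩
        have hcard := card_filter_dist_lt (ε := ε) (r := r) hε0 hr0 (ε • latt d z') (T.erase z')
        have hreal : (2 * r / ε + 3) ^ d ≤ Bc * t ^ p := by
          have hcb := count_bound d hd hε0 hε1 hδ0 hβ hγ hp hdd hev
          calc (2*r/ε+3)^d = (2 * (2 * min (ε ^ dd * t) 1 + ε / 4) / ε + 3)^d := by rw [hrdef]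
            _ ≤ (8:ℝ) ^ d * ((ε ^ (β - 2) + ε ^ (δ * (2 - β))) * ε ^ (2 * p / ((d:ℝ) - 2)) * t ^ p
                  + ε ^ (γ * p) * t ^ p) := hcb
            _ = Bc * t^p := by rw [hBc]; ring
        calc (∑ z ∈ T.erase z', Sind dd ε γ (dist (ε • latt d z) (ε • latt d z')) t)
            = (((T.erase z').filter
                fun z => t ∈ Sset dd ε γ (dist (ε • latt d z) (ε • latt d z'))).card : ℝ≥0∞) :=
              hsum
          _ ≤ (((T.erase z').filter
                fun z => dist (ε • latt d z) (ε • latt d z') < r).card : ℝ≥0∞) := by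
              exact_mod_cast Nat.cast_le.2 (Finset.card_le_card hfsub)
          _ = ENNReal.ofReal ((((T.erase z').filter
                fun z => dist (ε • latt d z) (ε • latt d z') < r).card : ℝ)) := by
              rw [ENNReal.ofReal_natCast]
          _ ≤ ENNReal.ofReal ((2*r/ε+3)^d) := ENNReal.ofReal_le_ofReal hcard
          _ ≤ ENNReal.ofReal (Bc * t^p) := ENNReal.ofReal_le_ofReal hreal
      · have hzero : ∀ z ∈ T.erase z',
            Sind dd ε γ (dist (ε • latt d z) (ε • latt d z')) t = 0 := by
          intro z _
          simp only [Sind]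
          apply Set.indicator_of_notMem
          exact fun hmem => hev hmem.1
        rw [Finset.sum_congr rfl hzero, Finset.sum_const, smul_zero]
        exact zero_le
    calc ∫⁻ ω, (∑ z ∈ T.erase z', Sind dd ε γ (dist (ε • latt d z) (ε • latt d z')) (ρ z' ω)) ∂P
        ≤ ∫⁻ ω, ENNReal.ofReal (Bc * (ρ z' ω)^p) ∂P :=
          lintegral_mono fun ω => hcount (ρ z' ω) (hpos z' ω)
      _ = ∫⁻ ω, ENNReal.ofReal Bc * ENNReal.ofReal ((ρ z' ω)^p) ∂P := by
          simp_rw [ENNReal.ofReal_mul hBnn]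
      _ = ENNReal.ofReal Bc * ∫⁻ ω, ENNReal.ofReal ((ρ z' ω)^p) ∂P :=
          lintegral_const_mul' _ _ ENNReal.ofReal_ne_top
      _ ≤ ENNReal.ofReal Bc * 1 := mul_le_mul_right (hEp z') _
      _ = ENNReal.ofReal Bc := mul_one _
  -- independence factorization for each pair
  have hpair : ∀ z z' : Fin d → ℤ, z' ≠ z →
      ∫⁻ ω, Sind dd ε γ (dist (ε • latt d z) (ε • latt d z')) (ρ z' ω)
          * ENNReal.ofReal (ρ z ω ^ ((d:ℝ)-2)) ∂P
        ≤ (∫⁻ ω, Sind dd ε γ (dist (ε • latt d z) (ε • latt d z')) (ρ z' ω) ∂P) * 2 := by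
    intro z z' hne
    have hind : IndepFun (fun ω => Sind dd ε γ (dist (ε • latt d z) (ε • latt d z')) (ρ z' ω))
        (fun ω => ENNReal.ofReal (ρ z ω ^ ((d:ℝ)-2))) P :=
      (hindep.indepFun hne).comp (measurable_Sind _ _ _ _) (hψmeas _)
    have hm1 : Measurable fun ω => Sind dd ε γ (dist (ε • latt d z) (ε • latt d z')) (ρ z' ω) :=
      (measurable_Sind _ _ _ _).comp (hmeas z')
    have hm2 : Measurable fun ω => ENNReal.ofReal (ρ z ω ^ ((d:ℝ)-2)) :=
      (hψmeas _).comp (hmeas z)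
    rw [lintegral_mul_eq_lintegral_mul_lintegral_of_indepFun''
      hm1.aemeasurable hm2.aemeasurable hind]
    exact mul_le_mul_right (hEq2 z) _
  -- summation swap
  have hswap : ∀ z z' : Fin d → ℤ, z ∈ T ∧ z' ∈ T.erase z ↔ z ∈ T.erase z' ∧ z' ∈ T := by
    intro z z'
    simp only [Finset.mem_erase]
    constructor
    · rintro ⟨h1, h2, h3⟩
      exact ⟨⟨fun h => h2 h.symm, h1⟩, h3⟩
    · rintro ⟨⟨h1, h2⟩, h3⟩
      exact ⟨h2, fun h => h1 h.symm, h3⟩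
  -- the measurable integrand of the dominating function
  have hmeas_pair : ∀ (z z' : Fin d → ℤ), Measurable fun ω =>
      Sind dd ε γ (dist (ε • latt d z) (ε • latt d z')) (ρ z' ω)
        * ENNReal.ofReal (ρ z ω ^ ((d:ℝ)-2)) :=
    fun z z' => ((measurable_Sind _ _ _ _).comp (hmeas z')).mul ((hψmeas _).comp (hmeas z))
  -- the main lintegral bound
  have hlint : ∫⁻ ω, ENNReal.ofReal (ε ^ (d:ℝ) * ∑' z,
        Set.indicator (Itilde d D ε δ (fun w => ρ w ω)) (fun w => ρ w ω ^ ((d:ℝ)-2)) z) ∂P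
      ≤ ENNReal.ofReal (C0 * ε ^ (γ*β)) := by
    calc ∫⁻ ω, ENNReal.ofReal (ε ^ (d:ℝ) * ∑' z,
          Set.indicator (Itilde d D ε δ (fun w => ρ w ω)) (fun w => ρ w ω ^ ((d:ℝ)-2)) z) ∂P
        ≤ ∫⁻ ω, ENNReal.ofReal (ε^(d:ℝ)) * ∑ z ∈ T, ∑ z' ∈ T.erase z,
            Sind dd ε γ (dist (ε • latt d z) (ε • latt d z')) (ρ z' ω)
              * ENNReal.ofReal (ρ z ω ^ ((d:ℝ)-2)) ∂P := lintegral_mono hptwise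
      _ = ENNReal.ofReal (ε^(d:ℝ)) * ∑ z ∈ T, ∑ z' ∈ T.erase z,
            ∫⁻ ω, Sind dd ε γ (dist (ε • latt d z) (ε • latt d z')) (ρ z' ω)
              * ENNReal.ofReal (ρ z ω ^ ((d:ℝ)-2)) ∂P := by
          rw [lintegral_const_mul' _ _ ENNReal.ofReal_ne_top,
            lintegral_finset_sum _ (fun z _ => Finset.measurable_sum _
              (fun z' _ => hmeas_pair z z'))]
          congr 1
          exact Finset.sum_congr rfl fun z _ =>
            lintegral_finset_sum _ (fun z' _ => hmeas_pair z z')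
      _ ≤ ENNReal.ofReal (ε^(d:ℝ)) * ∑ z ∈ T, ∑ z' ∈ T.erase z,
            (∫⁻ ω, Sind dd ε γ (dist (ε • latt d z) (ε • latt d z')) (ρ z' ω) ∂P) * 2 :=
          mul_le_mul_right (Finset.sum_le_sum fun z _ => Finset.sum_le_sum
            fun z' hz' => hpair z z' (Finset.mem_erase.1 hz').1) _
      _ = ENNReal.ofReal (ε^(d:ℝ)) * ((∑ z' ∈ T, ∑ z ∈ T.erase z',
            ∫⁻ ω, Sind dd ε γ (dist (ε • latt d z) (ε • latt d z')) (ρ z' ω) ∂P) * 2) := by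
          congr 1
          rw [Finset.sum_comm' hswap, Finset.sum_mul]
          exact Finset.sum_congr rfl fun z _ => (Finset.sum_mul _ _ _).symm
      _ ≤ ENNReal.ofReal (ε^(d:ℝ)) * ((∑ _z' ∈ T, ENNReal.ofReal Bc) * 2) := by
          refine mul_le_mul_right (mul_le_mul_left (Finset.sum_le_sum ?_) _) _
          intro z' _
          exact hinner z'
      _ = ENNReal.ofReal (ε^(d:ℝ)) * ((T.card : ℝ≥0∞) * ENNReal.ofReal Bc * 2) := by
          rw [Finset.sum_const, nsmul_eq_mul]
      _ ≤ ENNReal.ofReal (C0 * ε ^ (γ*β)) := by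
          rw [← ENNReal.ofReal_natCast T.card,
            show ((2:ℝ≥0∞)) = ENNReal.ofReal (2:ℝ) by norm_num,
            ← ENNReal.ofReal_mul (by positivity), ← ENNReal.ofReal_mul (by positivity),
            ← ENNReal.ofReal_mul (by positivity)]
          apply ENNReal.ofReal_le_ofReal
          have hεd : ε^((d:ℝ)) = ε^d := Real.rpow_natCast ε d
          have hBle' : Bc ≤ 8^d * (3 * ε^(γ*β)) := by
            rw [hBc]
            exact mul_le_mul_of_nonneg_left (B_le d hd hε0 hε1 hδ0 hδ2 hβ hγ hp)
              (by positivity)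
          have h1 : ((T.card:ℝ)) * Bc * 2
              ≤ ((2*R+3)^d/ε^d) * (8^d * (3 * ε^(γ*β))) * 2 := by
            have h2 := mul_le_mul hTcard hBle' hBnn
              (by positivity : (0:ℝ) ≤ (2*R+3)^d/ε^d)
            linarith
          calc ε^((d:ℝ)) * (((T.card:ℝ)) * Bc * 2)
              ≤ ε^((d:ℝ)) * (((2*R+3)^d/ε^d) * (8^d * (3 * ε^(γ*β))) * 2) :=
                mul_le_mul_of_nonneg_left h1 (by positivity)
            _ = C0 * ε^(γ*β) := by
                rw [hεd, hC0]
                field_simp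
                ring
  -- conclusion: from the Bochner integral to the lintegral
  have hFnn : ∀ ω : Ω, 0 ≤ ε ^ (d:ℝ) * ∑' z,
      Set.indicator (Itilde d D ε δ (fun w => ρ w ω)) (fun w => ρ w ω ^ ((d:ℝ)-2)) z :=
    fun ω => mul_nonneg (by positivity)
      (tsum_nonneg fun z => Set.indicator_nonneg (fun w _ => Real.rpow_nonneg (hpos w ω) _) z)
  by_cases hInt : Integrable (fun ω => ε ^ (d:ℝ) * ∑' z,
      Set.indicator (Itilde d D ε δ (fun w => ρ w ω)) (fun w => ρ w ω ^ ((d:ℝ)-2)) z) P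
  · rw [integral_eq_lintegral_of_nonneg_ae (Filter.Eventually.of_forall hFnn) hInt.1]
    exact ENNReal.toReal_le_of_le_ofReal (by positivity) hlint
  · rw [integral_undef hInt]
    positivity
end
end
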